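/- In the poset 𝒫⁺(λ,2)/∼, any element λ̄ = (λ_1,λ_2) has at most n covers of type I and at most 2^{n-1} − 1 covers of type II, hence at most n + 2^{n-1} − 1 covers in total. -/

import Mathlib

/-- `rs v i j = Σ_{s=i}^{j} v_s`, the range sum of coordinates `i` through `j`. -/
def rs {n : ℕ} (v : Fin n → ℕ) (i j : Fin n) : ℕ := ∑ s ∈ Finset.Icc i j, v s

/-- The preorder `⊴` on pairs of dominant vectors (the `ℓ = 2` inequalities are
automatic for pairs with the same sum). -/
def ple {n : ℕ} (p q : (Fin n → ℕ) × (Fin n → ℕ)) : Prop :=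
  ∀ i j : Fin n, i ≤ j →
    min (rs p.1 i j) (rs p.2 i j) ≤ min (rs q.1 i j) (rs q.2 i j)

/-- `q` is a cover of `p` in the poset `𝒫⁺(λ,2)/∼`. -/
def pcover {n : ℕ} (lam : Fin n → ℕ) (p q : (Fin n → ℕ) × (Fin n → ℕ)) : Prop :=
  p.1 + p.2 = lam ∧ q.1 + q.2 = lam ∧ ple p q ∧ ¬ ple q p ∧
    ∀ r : (Fin n → ℕ) × (Fin n → ℕ), r.1 + r.2 = lam →
      ple p r → ple r q → (ple r p ∨ ple q r)

namespace S15
open Finset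
open scoped Classical

variable {n : ℕ}

def Fsum (v : Fin n → ℕ) (k : ℕ) : ℕ :=
  ∑ s ∈ Finset.range k, if h : s < n then v ⟨s, h⟩ else 0

def DD (lam : Fin n → ℕ) (q : (Fin n → ℕ) × (Fin n → ℕ)) (k : ℕ) : ℤ :=
  2 * (Fsum q.1 k : ℤ) - (Fsum lam k : ℤ)

lemma Fsum_zero (v : Fin n → ℕ) : Fsum v 0 = 0 := by simp [Fsum]

lemma DD_zero (lam : Fin n → ℕ) (q : (Fin n → ℕ) × (Fin n → ℕ)) : DD lam q 0 = 0 := by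
  simp [DD, Fsum]

lemma Fsum_succ (v : Fin n → ℕ) (k : ℕ) (h : k < n) :
    Fsum v (k+1) = Fsum v k + v ⟨k, h⟩ := by
  simp [Fsum, Finset.sum_range_succ, h]

lemma Fsum_add {lam : Fin n → ℕ} {q : (Fin n → ℕ) × (Fin n → ℕ)}
    (hq : q.1 + q.2 = lam) (k : ℕ) : Fsum q.1 k + Fsum q.2 k = Fsum lam k := by
  unfold Fsum
  rw [← Finset.sum_add_distrib]
  refine Finset.sum_congr rfl fun s _ => ?_
  by_cases h : s < n
  · simp only [dif_pos h]
    have := congrFun hq ⟨s, h⟩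
    simpa [Pi.add_apply] using this
  · simp [dif_neg h]

lemma DD_succ (lam : Fin n → ℕ) (q : (Fin n → ℕ) × (Fin n → ℕ)) (k : ℕ) (h : k < n) :
    DD lam q (k+1) = DD lam q k + (2 * (q.1 ⟨k, h⟩ : ℤ) - (lam ⟨k, h⟩ : ℤ)) := by
  unfold DD
  rw [Fsum_succ q.1 k h, Fsum_succ lam k h]
  push_cast
  ring

lemma DD_swap {lam : Fin n → ℕ} {q : (Fin n → ℕ) × (Fin n → ℕ)}
    (hq : q.1 + q.2 = lam) (k : ℕ) : DD lam (q.2, q.1) k = - DD lam q k := by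
  have h := Fsum_add hq k
  unfold DD
  simp only []
  have : (Fsum q.1 k : ℤ) + (Fsum q.2 k : ℤ) = (Fsum lam k : ℤ) := by exact_mod_cast h
  omega

lemma comp_le {lam : Fin n → ℕ} {q : (Fin n → ℕ) × (Fin n → ℕ)}
    (hq : q.1 + q.2 = lam) (k : Fin n) : q.1 k ≤ lam k := by
  have := congrFun hq k
  simp only [Pi.add_apply] at this
  omega

lemma DD_step_le {lam : Fin n → ℕ} {q : (Fin n → ℕ) × (Fin n → ℕ)}
    (hq : q.1 + q.2 = lam) (k : ℕ) (h : k < n) :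
    |DD lam q (k+1) - DD lam q k| ≤ (lam ⟨k, h⟩ : ℤ) := by
  rw [DD_succ lam q k h]
  have h1 := comp_le hq ⟨k, h⟩
  rw [abs_le]
  constructor <;> [skip; skip] <;>
  · have : (q.1 ⟨k,h⟩ : ℤ) ≤ (lam ⟨k,h⟩ : ℤ) := by exact_mod_cast h1
    have h0 : (0:ℤ) ≤ (q.1 ⟨k,h⟩ : ℤ) := by positivity
    omega

lemma DD_sub_even (lam : Fin n → ℕ) (q p : (Fin n → ℕ) × (Fin n → ℕ)) (k : ℕ) :
    (2:ℤ) ∣ DD lam q k - DD lam p k :=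
  ⟨(Fsum q.1 k : ℤ) - (Fsum p.1 k : ℤ), by unfold DD; ring⟩

lemma rs_cast (v : Fin n → ℕ) (i j : Fin n) (hij : i ≤ j) :
    Fsum v (j.1+1) = Fsum v i.1 + rs v i j := by
  have h1 : rs v i j = ∑ s ∈ Finset.Icc i.1 j.1, (if h : s < n then v ⟨s, h⟩ else 0) := by
    rw [← Fin.map_valEmbedding_Icc, Finset.sum_map]
    refine Finset.sum_congr rfl fun s _ => ?_
    simp [Fin.valEmbedding]
  have hij' : i.1 ≤ j.1 := hij
  rw [h1]
  unfold Fsum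
  simp only [Finset.range_eq_Ico]
  rw [← Finset.sum_Ico_consecutive (fun s => if h : s < n then v ⟨s, h⟩ else 0)
    (Nat.zero_le i.1) (show i.1 ≤ j.1 + 1 by omega), Finset.Ico_add_one_right_eq_Icc]

lemma two_mul_min (a b : ℕ) : 2 * ((min a b : ℕ) : ℤ) = (a:ℤ) + b - |(a:ℤ) - b| := by
  rcases le_total a b with h | h
  · rw [min_eq_left h, abs_of_nonpos (by exact_mod_cast sub_nonpos.2 (show (a:ℤ) ≤ b by exact_mod_cast h))]
    ring
  · rw [min_eq_right h, abs_of_nonneg (by exact_mod_cast sub_nonneg.2 (show (b:ℤ) ≤ a by exact_mod_cast h))]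
    ring

lemma mkey {lam : Fin n → ℕ} {p q : (Fin n → ℕ) × (Fin n → ℕ)}
    (hp : p.1 + p.2 = lam) (hq : q.1 + q.2 = lam) (i j : Fin n) (hij : i ≤ j) :
    (min (rs p.1 i j) (rs p.2 i j) ≤ min (rs q.1 i j) (rs q.2 i j)) ↔
      |DD lam q (j.1+1) - DD lam q i.1| ≤ |DD lam p (j.1+1) - DD lam p i.1| := by
  have key : ∀ (r : (Fin n → ℕ) × (Fin n → ℕ)), r.1 + r.2 = lam →
      DD lam r (j.1+1) - DD lam r i.1 = (rs r.1 i j : ℤ) - (rs r.2 i j : ℤ) ∧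
      (rs r.1 i j : ℤ) + (rs r.2 i j : ℤ) = (rs lam i j : ℤ) := by
    intro r hr
    have c1 : (Fsum r.1 (j.1+1) : ℤ) = Fsum r.1 i.1 + rs r.1 i j := by
      exact_mod_cast congrArg (Nat.cast (R := ℤ)) (rs_cast r.1 i j hij)
    have c2 : (Fsum lam (j.1+1) : ℤ) = Fsum lam i.1 + rs lam i j := by
      exact_mod_cast congrArg (Nat.cast (R := ℤ)) (rs_cast lam i j hij)
    have c3 : (rs r.1 i j : ℤ) + (rs r.2 i j : ℤ) = (rs lam i j : ℤ) := by
      have : rs r.1 i j + rs r.2 i j = rs lam i j := by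
        unfold rs
        rw [← Finset.sum_add_distrib]
        exact Finset.sum_congr rfl fun s _ => by
          have := congrFun hr s; simpa [Pi.add_apply] using this
      exact_mod_cast this
    refine ⟨?_, c3⟩
    have c4 : (Fsum r.2 (j.1+1) : ℤ) = Fsum r.2 i.1 + rs r.2 i j := by
      exact_mod_cast congrArg (Nat.cast (R := ℤ)) (rs_cast r.2 i j hij)
    have c5 : ∀ m : ℕ, (Fsum r.1 m : ℤ) + (Fsum r.2 m : ℤ) = (Fsum lam m : ℤ) := by
      intro m; exact_mod_cast Fsum_add hr m
    unfold DD
    have := c5 (j.1+1); have := c5 i.1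
    omega
  obtain ⟨e1, s1⟩ := key p hp
  obtain ⟨e2, s2⟩ := key q hq
  have m1 := two_mul_min (rs p.1 i j) (rs p.2 i j)
  have m2 := two_mul_min (rs q.1 i j) (rs q.2 i j)
  rw [e1, e2]
  constructor
  · intro h
    have h' : ((min (rs p.1 i j) (rs p.2 i j) : ℕ) : ℤ) ≤ ((min (rs q.1 i j) (rs q.2 i j) : ℕ) : ℤ) := by
      exact_mod_cast h
    linarith
  · intro h
    have h' : ((min (rs p.1 i j) (rs p.2 i j) : ℕ) : ℤ) ≤ ((min (rs q.1 i j) (rs q.2 i j) : ℕ) : ℤ) := by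
      linarith
    exact_mod_cast h'

lemma ple_iff {lam : Fin n → ℕ} {p q : (Fin n → ℕ) × (Fin n → ℕ)}
    (hp : p.1 + p.2 = lam) (hq : q.1 + q.2 = lam) :
    ple p q ↔ ∀ k l : ℕ, k ≤ l → l ≤ n →
      |DD lam q l - DD lam q k| ≤ |DD lam p l - DD lam p k| := by
  constructor
  · intro h k l hkl hln
    rcases eq_or_lt_of_le hkl with rfl | hlt
    · simp
    · have hkn : k < n := by omega
      have hl1 : l - 1 < n := by omega
      have hij : (⟨k, hkn⟩ : Fin n) ≤ ⟨l - 1, hl1⟩ := by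
        simp only [Fin.mk_le_mk]; omega
      have := (mkey hp hq ⟨k, hkn⟩ ⟨l-1, hl1⟩ hij).1 (h _ _ hij)
      simpa only [show l - 1 + 1 = l by omega] using this
  · intro h i j hij
    exact (mkey hp hq i j hij).2 (h i.1 (j.1+1) (by have : i.1 ≤ j.1 := hij; omega) (by omega))

def Ctr (lam : Fin n → ℕ) (p q : (Fin n → ℕ) × (Fin n → ℕ)) : Prop :=
  ∀ k, k ≤ n → ∀ l, l ≤ n → |DD lam q l - DD lam q k| ≤ |DD lam p l - DD lam p k|

lemma ctr_of_ple {lam : Fin n → ℕ} {p q : (Fin n → ℕ) × (Fin n → ℕ)}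
    (hp : p.1 + p.2 = lam) (hq : q.1 + q.2 = lam) (h : ple p q) : Ctr lam p q := by
  intro k hk l hl
  rcases le_total k l with hkl | hlk
  · exact (ple_iff hp hq).1 h k l hkl hl
  · rw [abs_sub_comm (DD lam q l), abs_sub_comm (DD lam p l)]
    exact (ple_iff hp hq).1 h l k hlk hk

lemma eq_of_DD_eq {lam : Fin n → ℕ} {q r : (Fin n → ℕ) × (Fin n → ℕ)}
    (hq : q.1 + q.2 = lam) (hr : r.1 + r.2 = lam)
    (h : ∀ k, k ≤ n → DD lam q k = DD lam r k) : q = r := by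
  have h1 : q.1 = r.1 := by
    funext k
    have hk := k.isLt
    have e1 := DD_succ lam q k.1 hk
    have e2 := DD_succ lam r k.1 hk
    simp only [Fin.eta] at e1 e2
    have h3 := h k.1 (by omega)
    have h4 := h (k.1+1) (by omega)
    omega
  have h2 : q.2 = r.2 := by
    funext k
    have := congrFun hq k
    have := congrFun hr k
    simp only [Pi.add_apply] at *
    have := congrFun h1 k
    omega
  exact Prod.ext h1 h2

lemma rigid (N : ℕ) (E F : ℕ → ℤ) (hE0 : E 0 = 0) (hF0 : F 0 = 0)
    (h : ∀ k, k ≤ N → ∀ l, l ≤ N → |E l - E k| = |F l - F k|) :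
    (∀ k, k ≤ N → E k = F k) ∨ (∀ k, k ≤ N → E k = -F k) := by
  have habs : ∀ l, l ≤ N → |E l| = |F l| := by
    intro l hl
    have := h 0 (Nat.zero_le N) l hl
    simpa [hE0, hF0] using this
  by_cases hz : ∀ k, k ≤ N → F k = 0
  · left
    intro k hk
    have := habs k hk
    rw [hz k hk] at this ⊢
    simpa [abs_eq_zero] using this
  · push_neg at hz
    obtain ⟨k0, hk0N, hk0⟩ := hz
    have key : ∀ l, l ≤ N → (E l)^2 = (F l)^2 ∧ E l * E k0 = F l * F k0 := by
      intro l hl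
      have h1 : (E l)^2 = (F l)^2 := by
        rw [← sq_abs (E l), ← sq_abs (F l), habs l hl]
      have h2 : (E l - E k0)^2 = (F l - F k0)^2 := by
        rw [← sq_abs (E l - E k0), ← sq_abs (F l - F k0), h k0 hk0N l hl]
      have h3 : (E k0)^2 = (F k0)^2 := by
        rw [← sq_abs (E k0), ← sq_abs (F k0), habs k0 hk0N]
      have h4 : 2 * (E l * E k0) = 2 * (F l * F k0) := by linear_combination h1 + h3 - h2
      exact ⟨h1, by omega⟩
    rcases abs_eq_abs.1 (habs k0 hk0N) with hc | hc
    · left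
      intro l hl
      obtain ⟨h1, h2⟩ := key l hl
      rw [hc] at h2
      have : (E l - F l) * F k0 = 0 := by linear_combination h2
      rcases mul_eq_zero.1 this with h | h
      · linarith [sub_eq_zero.1 h]
      · exact absurd h hk0
    · right
      intro l hl
      obtain ⟨h1, h2⟩ := key l hl
      rw [hc] at h2
      have : (E l + F l) * F k0 = 0 := by linear_combination -h2
      rcases mul_eq_zero.1 this with h | h
      · have := add_eq_zero_iff_eq_neg.1 h
        exact this
      · exact absurd h hk0

lemma sym2_eq_of_DD_abs {lam : Fin n → ℕ} {q r : (Fin n → ℕ) × (Fin n → ℕ)}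
    (hq : q.1 + q.2 = lam) (hr : r.1 + r.2 = lam)
    (h : ∀ k, k ≤ n → ∀ l, l ≤ n → |DD lam q l - DD lam q k| = |DD lam r l - DD lam r k|) :
    Sym2.mk q.1 q.2 = Sym2.mk r.1 r.2 := by
  rcases rigid n (DD lam q) (DD lam r) (DD_zero lam q) (DD_zero lam r) h with hc | hc
  · rw [eq_of_DD_eq hq hr hc]
  · have : q = (r.2, r.1) := by
      refine eq_of_DD_eq hq (by rw [← hr]; funext k; simp [Pi.add_apply, add_comm]) ?_
      intro k hk
      rw [DD_swap hr k]
      exact hc k hk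
    rw [this]
    exact Sym2.mk_eq_mk_iff.2 (Or.inr rfl)

def Vv (lam : Fin n → ℕ) (p : (Fin n → ℕ) × (Fin n → ℕ)) : Finset ℤ :=
  Finset.image (fun k : Fin (n+1) => DD lam p k.1) Finset.univ

lemma zero_mem_Vv (lam : Fin n → ℕ) (p : (Fin n → ℕ) × (Fin n → ℕ)) : (0:ℤ) ∈ Vv lam p :=
  Finset.mem_image.2 ⟨0, Finset.mem_univ _, by simpa using DD_zero lam p⟩

lemma mem_Vv_of_le {lam : Fin n → ℕ} {p : (Fin n → ℕ) × (Fin n → ℕ)} {k : ℕ} (hk : k ≤ n) :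
    DD lam p k ∈ Vv lam p :=
  Finset.mem_image.2 ⟨⟨k, by omega⟩, Finset.mem_univ _, rfl⟩

lemma card_Vv_le (lam : Fin n → ℕ) (p : (Fin n → ℕ) × (Fin n → ℕ)) :
    (Vv lam p).card ≤ n + 1 := by
  refine le_trans (Finset.card_image_le) ?_
  simp

def vmax (lam : Fin n → ℕ) (p : (Fin n → ℕ) × (Fin n → ℕ)) : ℤ :=
  (Vv lam p).max' ⟨0, zero_mem_Vv lam p⟩

lemma vmax_mem (lam : Fin n → ℕ) (p : (Fin n → ℕ) × (Fin n → ℕ)) : vmax lam p ∈ Vv lam p :=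
  (Vv lam p).max'_mem _

lemma le_vmax {lam : Fin n → ℕ} {p : (Fin n → ℕ) × (Fin n → ℕ)} {v : ℤ} (hv : v ∈ Vv lam p) :
    v ≤ vmax lam p :=
  (Vv lam p).le_max' v hv

lemma vmax_nonneg (lam : Fin n → ℕ) (p : (Fin n → ℕ) × (Fin n → ℕ)) : 0 ≤ vmax lam p :=
  le_vmax (zero_mem_Vv lam p)

def nxt (lam : Fin n → ℕ) (p : (Fin n → ℕ) × (Fin n → ℕ)) (v : ℤ) : ℤ :=
  if h : ((Vv lam p).filter (fun u => v < u)).Nonempty then ((Vv lam p).filter (fun u => v < u)).min' h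
  else v + 1

lemma nxt_spec {lam : Fin n → ℕ} {p : (Fin n → ℕ) × (Fin n → ℕ)} {v : ℤ}
    (hv : v < vmax lam p) :
    nxt lam p v ∈ Vv lam p ∧ v < nxt lam p v ∧ ∀ u ∈ Vv lam p, v < u → nxt lam p v ≤ u := by
  have hne : ((Vv lam p).filter (fun u => v < u)).Nonempty :=
    ⟨vmax lam p, Finset.mem_filter.2 ⟨vmax_mem lam p, hv⟩⟩
  have hdef : nxt lam p v = ((Vv lam p).filter (fun u => v < u)).min' hne := by
    unfold nxt; exact dif_pos hne
  rw [hdef]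
  have hmem := Finset.min'_mem _ hne
  rw [Finset.mem_filter] at hmem
  refine ⟨hmem.1, hmem.2, fun u hu hvu => Finset.min'_le _ u ?_⟩
  exact Finset.mem_filter.2 ⟨hu, hvu⟩

def prv (lam : Fin n → ℕ) (p : (Fin n → ℕ) × (Fin n → ℕ)) (v : ℤ) : ℤ :=
  if h : ((Vv lam p).filter (fun u => u < v)).Nonempty then ((Vv lam p).filter (fun u => u < v)).max' h
  else v - 1

lemma prv_spec {lam : Fin n → ℕ} {p : (Fin n → ℕ) × (Fin n → ℕ)} {v : ℤ}
    (hne' : ∃ u ∈ Vv lam p, u < v) :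
    prv lam p v ∈ Vv lam p ∧ prv lam p v < v ∧ ∀ u ∈ Vv lam p, u < v → u ≤ prv lam p v := by
  obtain ⟨u0, hu0, hu0v⟩ := hne'
  have hne : ((Vv lam p).filter (fun u => u < v)).Nonempty :=
    ⟨u0, Finset.mem_filter.2 ⟨hu0, hu0v⟩⟩
  have hdef : prv lam p v = ((Vv lam p).filter (fun u => u < v)).max' hne := by
    unfold prv; exact dif_pos hne
  rw [hdef]
  have hmem := Finset.max'_mem _ hne
  rw [Finset.mem_filter] at hmem
  refine ⟨hmem.1, hmem.2, fun u hu hvu => Finset.le_max' _ u ?_⟩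
  exact Finset.mem_filter.2 ⟨hu, hvu⟩

lemma nxt_prv {lam : Fin n → ℕ} {p : (Fin n → ℕ) × (Fin n → ℕ)} {v : ℤ}
    (hv : v ∈ Vv lam p) (hne' : ∃ u ∈ Vv lam p, u < v) :
    nxt lam p (prv lam p v) = v := by
  obtain ⟨hpm, hplt, hpmax⟩ := prv_spec hne'
  have hlt : prv lam p v < vmax lam p := lt_of_lt_of_le hplt (le_vmax hv)
  obtain ⟨hnm, hnlt, hnmin⟩ := nxt_spec hlt
  have h1 : nxt lam p (prv lam p v) ≤ v := hnmin v hv hplt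
  rcases lt_or_eq_of_le h1 with h2 | h2
  · exact absurd (hpmax _ hnm h2) (not_le.2 hnlt)
  · exact h2

noncomputable def wit (lam : Fin n → ℕ) (p : (Fin n → ℕ) × (Fin n → ℕ)) (v : ℤ) : ℕ :=
  if h : ∃ k, k ≤ n ∧ DD lam p k = v then h.choose else 0

lemma wit_spec {lam : Fin n → ℕ} {p : (Fin n → ℕ) × (Fin n → ℕ)} {v : ℤ}
    (hv : v ∈ Vv lam p) : wit lam p v ≤ n ∧ DD lam p (wit lam p v) = v := by
  obtain ⟨k, -, hk⟩ := Finset.mem_image.1 hv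
  have h : ∃ k, k ≤ n ∧ DD lam p k = v := ⟨k.1, by omega, hk⟩
  rw [wit, dif_pos h]
  exact h.choose_spec

def Sh (c x : ℤ) : ℤ :=
  if 0 ≤ c then (if c < x then x - 2 else x) else (if x ≤ c then x + 2 else x)

lemma Sh_zero (c : ℤ) : Sh c 0 = 0 := by
  unfold Sh; split_ifs <;> omega

lemma Sh_even (c x : ℤ) : (2:ℤ) ∣ Sh c x - x := by
  unfold Sh; split_ifs <;> omega

lemma Sh_lip (c x y : ℤ) : |Sh c x - Sh c y| ≤ |x - y| := by
  have key : ∀ a b : ℤ, 1 ≤ a - b → |a - 2 - b| ≤ |a - b| := by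
    intro a b hab
    rw [abs_of_pos (by omega : (0:ℤ) < a - b), abs_le]
    omega
  unfold Sh
  by_cases h1 : 0 ≤ c
  · rw [if_pos h1, if_pos h1]
    by_cases hx : c < x <;> by_cases hy : c < y
    · rw [if_pos hx, if_pos hy, show x - 2 - (y - 2) = x - y by ring]
    · rw [if_pos hx, if_neg hy]; exact key x y (by omega)
    · rw [if_neg hx, if_pos hy, show x - (y - 2) = -(y - 2 - x) by ring, abs_neg,
        abs_sub_comm x y]
      exact key y x (by omega)
    · rw [if_neg hx, if_neg hy]
  · rw [if_neg h1, if_neg h1]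
    by_cases hx : x ≤ c <;> by_cases hy : y ≤ c
    · rw [if_pos hx, if_pos hy, show x + 2 - (y + 2) = x - y by ring]
    · rw [if_pos hx, if_neg hy, show x + 2 - y = -(y - 2 - x) by ring, abs_neg,
        abs_sub_comm x y]
      exact key y x (by omega)
    · rw [if_neg hx, if_pos hy, show x - (y + 2) = x - 2 - y by ring]
      exact key x y (by omega)
    · rw [if_neg hx, if_neg hy]

lemma Sh_cross {c x y : ℤ} (hy : y ≤ c) (hx : c < x) : Sh c x - Sh c y = x - y - 2 := by
  unfold Sh
  split_ifs <;> omega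

def pairOf (lam : Fin n → ℕ) (S : ℕ → ℤ) : (Fin n → ℕ) × (Fin n → ℕ) :=
  (fun k => ((S (k.1+1) - S k.1 + lam k) / 2).toNat,
   fun k => lam k - ((S (k.1+1) - S k.1 + lam k) / 2).toNat)

lemma pairOf_fst_le {lam : Fin n → ℕ} {S : ℕ → ℤ}
    (hstep : ∀ k : Fin n, |S (k.1+1) - S k.1| ≤ (lam k : ℤ)) (k : Fin n) :
    (pairOf lam S).1 k ≤ lam k := by
  have h1 := hstep k
  rw [abs_le] at h1
  have h2 : (S (k.1+1) - S k.1 + lam k) / 2 ≤ ((lam k : ℤ) + lam k) / 2 :=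
    Int.ediv_le_ediv (by norm_num) (by omega)
  have h3 : ((lam k : ℤ) + lam k) / 2 = lam k := by omega
  simp only [pairOf]
  omega

lemma pairOf_sum {lam : Fin n → ℕ} {S : ℕ → ℤ}
    (hstep : ∀ k : Fin n, |S (k.1+1) - S k.1| ≤ (lam k : ℤ)) :
    (pairOf lam S).1 + (pairOf lam S).2 = lam := by
  funext k
  have := pairOf_fst_le hstep k
  simp only [pairOf, Pi.add_apply] at this ⊢
  omega

lemma DD_pairOf {lam : Fin n → ℕ} {S : ℕ → ℤ} (hS0 : S 0 = 0)
    (hstep : ∀ k : Fin n, |S (k.1+1) - S k.1| ≤ (lam k : ℤ))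
    (hpar : ∀ k : Fin n, (2:ℤ) ∣ (S (k.1+1) - S k.1 - lam k)) :
    ∀ k, k ≤ n → DD lam (pairOf lam S) k = S k := by
  intro k
  induction k with
  | zero => intro _; rw [DD_zero, hS0]
  | succ m ih =>
    intro hm
    have hmn : m < n := by omega
    have e1 := DD_succ lam (pairOf lam S) m hmn
    have e2 := ih (by omega)
    have h1 := hstep ⟨m, hmn⟩
    have h2 := hpar ⟨m, hmn⟩
    rw [abs_le] at h1
    have hnn : (0:ℤ) ≤ S (m+1) - S m + lam ⟨m, hmn⟩ := by
      simp only [Fin.val_mk] at h1 ⊢; omega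
    have hdvd : (2:ℤ) ∣ (S (m+1) - S m + lam ⟨m, hmn⟩) := by
      simp only [Fin.val_mk] at h2 ⊢; omega
    have hval : ((pairOf lam S).1 ⟨m, hmn⟩ : ℤ) = (S (m+1) - S m + lam ⟨m, hmn⟩) / 2 := by
      simp only [pairOf, Fin.val_mk]
      exact Int.toNat_of_nonneg (Int.ediv_nonneg hnn (by norm_num))
    rw [e1, e2, hval]
    have := Int.ediv_mul_cancel hdvd
    omega

noncomputable def Ediff (lam : Fin n → ℕ) (p q : (Fin n → ℕ) × (Fin n → ℕ)) (v : ℤ) : ℤ :=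
  DD lam q (wit lam p (nxt lam p v)) - DD lam q (wit lam p v)

def GapsOK (lam : Fin n → ℕ) (p q : (Fin n → ℕ) × (Fin n → ℕ)) : Prop :=
  ∀ v ∈ Vv lam p, v ≠ vmax lam p → |Ediff lam p q v| = nxt lam p v - v

noncomputable def Pat (lam : Fin n → ℕ) (p q : (Fin n → ℕ) × (Fin n → ℕ)) (v : ℤ) : Bool :=
  decide (0 < Ediff lam p q v)

noncomputable def j0 (lam : Fin n → ℕ) (p : (Fin n → ℕ) × (Fin n → ℕ)) : ℤ :=
  if (0:ℤ) = vmax lam p then prv lam p 0 else 0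

def Canon (lam : Fin n → ℕ) (p q : (Fin n → ℕ) × (Fin n → ℕ)) : Prop :=
  0 < Ediff lam p q (j0 lam p)

noncomputable def kset (lam : Fin n → ℕ) (p : (Fin n → ℕ) × (Fin n → ℕ)) : Finset ℤ :=
  ((Vv lam p).erase (vmax lam p)).erase (j0 lam p)

def CanonEx (lam : Fin n → ℕ) (p : (Fin n → ℕ) × (Fin n → ℕ)) (x : Sym2 (Fin n → ℕ)) : Prop :=
  ∃ q, x = Sym2.mk q.1 q.2 ∧ q.1 + q.2 = lam ∧ Ctr lam p q ∧ GapsOK lam p q ∧ Canon lam p q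

noncomputable def Phi (lam : Fin n → ℕ) (p : (Fin n → ℕ) × (Fin n → ℕ))
    (x : Sym2 (Fin n → ℕ)) : {v : ℤ // v ∈ kset lam p} → Bool :=
  if h : CanonEx lam p x then (fun v => Pat lam p h.choose v.1) else (fun _ => true)

noncomputable def shrinkSym (lam : Fin n → ℕ) (p : (Fin n → ℕ) × (Fin n → ℕ)) (v : ℤ) :
    Sym2 (Fin n → ℕ) :=
  Sym2.mk (pairOf lam (fun k => Sh v (DD lam p k))).1 (pairOf lam (fun k => Sh v (DD lam p k))).2

lemma j0_spec {lam : Fin n → ℕ} {p : (Fin n → ℕ) × (Fin n → ℕ)}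
    (hm : 2 ≤ (Vv lam p).card) : j0 lam p ∈ Vv lam p ∧ j0 lam p ≠ vmax lam p := by
  unfold j0
  by_cases h0 : (0:ℤ) = vmax lam p
  · rw [if_pos h0]
    obtain ⟨u, hu, hune⟩ := Finset.exists_mem_ne (s := Vv lam p) (by omega) (0:ℤ)
    have huneg : u < 0 := by
      have := le_vmax hu
      omega
    obtain ⟨h1, h2, -⟩ := prv_spec ⟨u, hu, huneg⟩
    exact ⟨h1, by omega⟩
  · rw [if_neg h0]
    exact ⟨zero_mem_Vv lam p, h0⟩

lemma anchor {lam : Fin n → ℕ} {p q : (Fin n → ℕ) × (Fin n → ℕ)} (hc : Ctr lam p q) :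
    DD lam q (wit lam p 0) = 0 := by
  obtain ⟨hle, hD⟩ := wit_spec (zero_mem_Vv lam p)
  have h := hc 0 (Nat.zero_le n) (wit lam p 0) hle
  rw [DD_zero, hD, DD_zero] at h
  simp only [sub_zero] at h
  have := abs_nonneg (DD lam q (wit lam p 0))
  have h0 : |DD lam q (wit lam p 0)| = 0 := le_antisymm (by simpa using h) this
  exact abs_eq_zero.1 h0

lemma wd {lam : Fin n → ℕ} {p q : (Fin n → ℕ) × (Fin n → ℕ)} (hc : Ctr lam p q) :
    ∀ j, j ≤ n → DD lam q j = DD lam q (wit lam p (DD lam p j)) := by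
  intro j hj
  obtain ⟨hle, hD⟩ := wit_spec (mem_Vv_of_le (lam := lam) (p := p) hj)
  have h := hc j hj (wit lam p (DD lam p j)) hle
  rw [hD, sub_self, abs_zero] at h
  have := abs_nonneg (DD lam q (wit lam p (DD lam p j)) - DD lam q j)
  have h0 : DD lam q (wit lam p (DD lam p j)) - DD lam q j = 0 :=
    abs_eq_zero.1 (le_antisymm h this)
  omega

lemma determine {lam : Fin n → ℕ} {p q q' : (Fin n → ℕ) × (Fin n → ℕ)}
    (hcq : Ctr lam p q) (hcq' : Ctr lam p q')
    (gq : GapsOK lam p q) (gq' : GapsOK lam p q')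
    (hsgn : ∀ v ∈ Vv lam p, v ≠ vmax lam p → Pat lam p q v = Pat lam p q' v) :
    ∀ k, k ≤ n → DD lam q k = DD lam q' k := by
  have step : ∀ w ∈ Vv lam p, w ≠ vmax lam p →
      ((DD lam q (wit lam p w) = DD lam q' (wit lam p w) →
        DD lam q (wit lam p (nxt lam p w)) = DD lam q' (wit lam p (nxt lam p w))) ∧
       (DD lam q (wit lam p (nxt lam p w)) = DD lam q' (wit lam p (nxt lam p w)) →
        DD lam q (wit lam p w) = DD lam q' (wit lam p w))) := by
    intro w hw hne
    have g1 := gq w hw hne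
    have g2 := gq' w hw hne
    have hs := hsgn w hw hne
    have hlt : w < vmax lam p := lt_of_le_of_ne (le_vmax hw) hne
    have hnlt := (nxt_spec hlt).2.1
    have hgap : (0:ℤ) ≤ nxt lam p w - w := by omega
    have e1 := (abs_eq hgap).1 g1
    have e2 := (abs_eq hgap).1 g2
    have hiff : (0 < Ediff lam p q w) ↔ (0 < Ediff lam p q' w) := by
      have := congrArg (fun b : Bool => b = true) hs
      simpa [Pat, decide_eq_true_eq] using hs
    unfold Ediff at e1 e2 hiff
    constructor <;> intro hbase <;>
    · by_cases hq0 : 0 < DD lam q (wit lam p (nxt lam p w)) - DD lam q (wit lam p w)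
      · have := hiff.1 hq0; omega
      · have h2 : ¬ (0 < DD lam q' (wit lam p (nxt lam p w)) - DD lam q' (wit lam p w)) :=
          fun hh => hq0 (hiff.2 hh)
        omega
  have hpos : ∀ N : ℕ, ∀ v, v ∈ Vv lam p → 0 ≤ v → v.toNat ≤ N →
      DD lam q (wit lam p v) = DD lam q' (wit lam p v) := by
    intro N
    induction N with
    | zero =>
      intro v hv h0 hN
      have hv0 : v = 0 := by omega
      subst hv0
      rw [anchor hcq, anchor hcq']
    | succ N ih =>
      intro v hv h0 hN
      by_cases hsm : v.toNat ≤ N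
      · exact ih v hv h0 hsm
      · have hvpos : 0 < v := by omega
        have hex : ∃ u ∈ Vv lam p, u < v := ⟨0, zero_mem_Vv lam p, hvpos⟩
        obtain ⟨hpm, hplt, hpmax⟩ := prv_spec hex
        have hnp : nxt lam p (prv lam p v) = v := nxt_prv hv hex
        have hp0 : 0 ≤ prv lam p v := hpmax 0 (zero_mem_Vv lam p) hvpos
        have hpN : (prv lam p v).toNat ≤ N := by omega
        have hbase := ih _ hpm hp0 hpN
        have hpne : prv lam p v ≠ vmax lam p := by
          have := le_vmax hv; omega
        have := (step _ hpm hpne).1 hbase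
        rw [hnp] at this
        exact this
  have hneg : ∀ N : ℕ, ∀ v, v ∈ Vv lam p → v ≤ 0 → (-v).toNat ≤ N →
      DD lam q (wit lam p v) = DD lam q' (wit lam p v) := by
    intro N
    induction N with
    | zero =>
      intro v hv h0 hN
      have hv0 : v = 0 := by omega
      subst hv0
      rw [anchor hcq, anchor hcq']
    | succ N ih =>
      intro v hv h0 hN
      by_cases hsm : (-v).toNat ≤ N
      · exact ih v hv h0 hsm
      · have hvneg : v < 0 := by omega
        have hvlt : v < vmax lam p := by
          have := vmax_nonneg lam p; omega
        obtain ⟨hnm, hnlt, hnmin⟩ := nxt_spec hvlt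
        have hnle : nxt lam p v ≤ 0 := hnmin 0 (zero_mem_Vv lam p) hvneg
        have hN' : (-(nxt lam p v)).toNat ≤ N := by omega
        have hbase := ih _ hnm (by omega) hN'
        have hvne : v ≠ vmax lam p := by
          have := vmax_nonneg lam p; omega
        exact (step v hv hvne).2 hbase
  intro k hk
  have hVeq : ∀ v ∈ Vv lam p, DD lam q (wit lam p v) = DD lam q' (wit lam p v) := by
    intro v hv
    rcases le_total 0 v with h | h
    · exact hpos v.toNat v hv h le_rfl
    · exact hneg (-v).toNat v hv h le_rfl
  rw [wd hcq k hk, wd hcq' k hk]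
  exact hVeq _ (mem_Vv_of_le hk)

lemma Sh_low {c x y : ℤ} (hx : x ≤ c) (hy : y ≤ c) : Sh c x - Sh c y = x - y := by
  unfold Sh; split_ifs <;> omega

lemma Sh_high {c x y : ℤ} (hx : c < x) (hy : c < y) : Sh c x - Sh c y = x - y := by
  unfold Sh; split_ifs <;> omega

lemma ple_refl' (p : (Fin n → ℕ) × (Fin n → ℕ)) : ple p p := fun _ _ _ => le_rfl

lemma ple_swap' (p : (Fin n → ℕ) × (Fin n → ℕ)) : ple (p.2, p.1) p := fun i j _ =>
  le_of_eq (min_comm _ _)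

lemma Ctr_refl (lam : Fin n → ℕ) (p : (Fin n → ℕ) × (Fin n → ℕ)) : Ctr lam p p :=
  fun _ _ _ _ => le_rfl

lemma Ediff_refl {lam : Fin n → ℕ} {p : (Fin n → ℕ) × (Fin n → ℕ)} {v : ℤ}
    (hv : v ∈ Vv lam p) (hne : v ≠ vmax lam p) :
    Ediff lam p p v = nxt lam p v - v := by
  have hlt : v < vmax lam p := lt_of_le_of_ne (le_vmax hv) hne
  obtain ⟨hnm, -, -⟩ := nxt_spec hlt
  unfold Ediff
  rw [(wit_spec hnm).2, (wit_spec hv).2]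

lemma GapsOK_refl (lam : Fin n → ℕ) (p : (Fin n → ℕ) × (Fin n → ℕ)) : GapsOK lam p p := by
  intro v hv hne
  rw [Ediff_refl hv hne]
  have hlt : v < vmax lam p := lt_of_le_of_ne (le_vmax hv) hne
  exact abs_of_nonneg (by have := (nxt_spec hlt).2.1; omega)

lemma Pat_refl_true {lam : Fin n → ℕ} {p : (Fin n → ℕ) × (Fin n → ℕ)} {v : ℤ}
    (hv : v ∈ Vv lam p) (hne : v ≠ vmax lam p) : Pat lam p p v = true := by
  have hlt : v < vmax lam p := lt_of_le_of_ne (le_vmax hv) hne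
  have := (nxt_spec hlt).2.1
  simp only [Pat, Ediff_refl hv hne, decide_eq_true_eq]
  omega

lemma Canon_refl {lam : Fin n → ℕ} {p : (Fin n → ℕ) × (Fin n → ℕ)}
    (hm : 2 ≤ (Vv lam p).card) : Canon lam p p := by
  obtain ⟨hj0m, hj0ne⟩ := j0_spec hm
  unfold Canon
  rw [Ediff_refl hj0m hj0ne]
  have hlt : j0 lam p < vmax lam p := lt_of_le_of_ne (le_vmax hj0m) hj0ne
  have := (nxt_spec hlt).2.1
  omega

lemma Pat_true_of_canon {lam : Fin n → ℕ} {p q : (Fin n → ℕ) × (Fin n → ℕ)}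
    (hc : Canon lam p q) : Pat lam p q (j0 lam p) = true := by
  simpa [Pat, decide_eq_true_eq, Canon] using hc

lemma Ediff_swap {lam : Fin n → ℕ} {p q : (Fin n → ℕ) × (Fin n → ℕ)}
    (hq : q.1 + q.2 = lam) (v : ℤ) : Ediff lam p (q.2, q.1) v = - Ediff lam p q v := by
  unfold Ediff
  rw [DD_swap hq, DD_swap hq]
  ring

lemma canonEx_of {lam : Fin n → ℕ} {p q : (Fin n → ℕ) × (Fin n → ℕ)}
    (hm : 2 ≤ (Vv lam p).card) (hq : q.1 + q.2 = lam) (hc : Ctr lam p q)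
    (hg : GapsOK lam p q) : CanonEx lam p (Sym2.mk q.1 q.2) := by
  obtain ⟨hj0m, hj0ne⟩ := j0_spec hm
  have g := hg _ hj0m hj0ne
  have hlt : j0 lam p < vmax lam p := lt_of_le_of_ne (le_vmax hj0m) hj0ne
  have hgap := (nxt_spec hlt).2.1
  have hne0 : Ediff lam p q (j0 lam p) ≠ 0 := by
    intro h0; rw [h0, abs_zero] at g; omega
  by_cases hcan : 0 < Ediff lam p q (j0 lam p)
  · exact ⟨q, rfl, hq, hc, hg, hcan⟩
  · refine ⟨(q.2, q.1), Sym2.mk_eq_mk_iff.2 (Or.inr rfl), ?_, ?_, ?_, ?_⟩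
    · rw [← hq]; exact add_comm q.2 q.1
    · intro k hk l hl
      rw [DD_swap hq, DD_swap hq,
        show -DD lam q l - -DD lam q k = -(DD lam q l - DD lam q k) by ring, abs_neg]
      exact hc k hk l hl
    · intro v hv hne
      rw [Ediff_swap hq, abs_neg]
      exact hg v hv hne
    · unfold Canon
      rw [Ediff_swap hq]
      omega

end S15

open S15 in
/-- Any element of `𝒫⁺(λ,2)/∼` has at most `n + 2^{n-1} - 1` covers
(at most `n` of type I and at most `2^{n-1} - 1` of type II). -/
theorem stmt_15 (n : ℕ) (hn : 1 ≤ n) (lam : Fin n → ℕ)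
    (p : (Fin n → ℕ) × (Fin n → ℕ)) (hp : p.1 + p.2 = lam) :
    Set.ncard {x : Sym2 (Fin n → ℕ) |
        ∃ q : (Fin n → ℕ) × (Fin n → ℕ), x = Sym2.mk q.1 q.2 ∧ pcover lam p q} ≤
      n + 2 ^ (n - 1) - 1 := by
  classical
  set S : Set (Sym2 (Fin n → ℕ)) :=
    {x | ∃ q : (Fin n → ℕ) × (Fin n → ℕ), x = Sym2.mk q.1 q.2 ∧ pcover lam p q} with hSdef
  by_cases hm : 2 ≤ (Vv lam p).card
  swap
  · -- degenerate case : V = {0}, no covers at all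
    have hall : ∀ k, k ≤ n → DD lam p k = 0 := by
      intro k hk
      exact Finset.card_le_one.1 (by omega) _ (mem_Vv_of_le hk) _ (zero_mem_Vv lam p)
    have hempty : S = ∅ := by
      ext x
      simp only [hSdef, Set.mem_setOf_eq, Set.mem_empty_iff_false, iff_false, not_exists]
      rintro q ⟨hxq, hcov⟩
      exact hcov.2.2.2.1 (by
        rw [ple_iff hcov.2.1 hp]
        intro k l hkl hln
        rw [hall l hln, hall k (le_trans hkl hln)]
        simpa using abs_nonneg _)
    rw [hempty]
    simp
  · obtain ⟨hj0m, hj0ne⟩ := j0_spec (lam := lam) (p := p) hm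
    set A : Set (Sym2 (Fin n → ℕ)) :=
      (fun v => shrinkSym lam p v) '' (((Vv lam p).erase (vmax lam p) : Finset ℤ) : Set ℤ)
      with hAdef
    set B : Set (Sym2 (Fin n → ℕ)) :=
      {x | ∃ q, x = Sym2.mk q.1 q.2 ∧ pcover lam p q ∧ GapsOK lam p q} with hBdef
    -- B analysis
    have hBce : ∀ x ∈ B, CanonEx lam p x := by
      rintro x ⟨q, hxq, hcov, hgap⟩
      rw [hxq]
      exact canonEx_of hm hcov.2.1 (ctr_of_ple hp hcov.2.1 hcov.2.2.1) hgap
    have hsgn_of : ∀ x (hce : CanonEx lam p x) (hce' : CanonEx lam p x),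
        True := fun _ _ _ => trivial
    have hdet : ∀ (q q' : (Fin n → ℕ) × (Fin n → ℕ)),
        q.1 + q.2 = lam → q'.1 + q'.2 = lam →
        Ctr lam p q → Ctr lam p q' → GapsOK lam p q → GapsOK lam p q' →
        Canon lam p q → Canon lam p q' →
        (∀ v : {v : ℤ // v ∈ kset lam p}, Pat lam p q v.1 = Pat lam p q' v.1) →
        q = q' := by
      intro q q' hqs hqs' hc hc' hg hg' hcan hcan' hpat
      refine eq_of_DD_eq hqs hqs' (determine hc hc' hg hg' ?_)
      intro v hv hne
      by_cases hvj : v = j0 lam p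
      · subst hvj
        rw [Pat_true_of_canon hcan, Pat_true_of_canon hcan']
      · exact hpat ⟨v, Finset.mem_erase.2 ⟨hvj, Finset.mem_erase.2 ⟨hne, hv⟩⟩⟩
    have hPhi_eq : ∀ x (hce : CanonEx lam p x),
        Phi lam p x = fun v : {v : ℤ // v ∈ kset lam p} => Pat lam p hce.choose v.1 := by
      intro x hce
      unfold Phi
      exact dif_pos hce
    have hmaps : ∀ x ∈ B, Phi lam p x ∈
        (Set.univ \ {fun _ => true} : Set ({v : ℤ // v ∈ kset lam p} → Bool)) := by
      intro x hx
      have hce := hBce x hx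
      obtain ⟨hxc, hqcs, hqcc, hqcg, hqccan⟩ := hce.choose_spec
      refine ⟨Set.mem_univ _, ?_⟩
      simp only [Set.mem_singleton_iff]
      intro heq
      rw [hPhi_eq x hce] at heq
      have hqp : hce.choose = p := by
        refine hdet _ _ hqcs hp hqcc (Ctr_refl lam p) hqcg (GapsOK_refl lam p) hqccan
          (Canon_refl hm) ?_
        intro v
        have h1 := congrFun heq v
        change Pat lam p hce.choose v.1 = true at h1
        rw [h1, Pat_refl_true (Finset.mem_of_mem_erase (Finset.mem_of_mem_erase v.2))
          (Finset.ne_of_mem_erase (Finset.mem_of_mem_erase v.2))]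
      obtain ⟨q0, hxq0, hcov0, -⟩ := hx
      have hx_p : Sym2.mk q0.1 q0.2 = Sym2.mk p.1 p.2 := by
        rw [← hxq0, hxc, hqp]
      rcases Sym2.mk_eq_mk_iff.1 hx_p with h | h
      · exact hcov0.2.2.2.1 (h ▸ ple_refl' p)
      · exact hcov0.2.2.2.1 (by rw [h]; exact ple_swap' p)
    have hinj : Set.InjOn (Phi lam p) B := by
      intro x hx x' hx' hPhieq
      have hce := hBce x hx
      have hce' := hBce x' hx'
      obtain ⟨hxc, hqcs, hqcc, hqcg, hqccan⟩ := hce.choose_spec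
      obtain ⟨hxc', hqcs', hqcc', hqcg', hqccan'⟩ := hce'.choose_spec
      have : hce.choose = hce'.choose := by
        refine hdet _ _ hqcs hqcs' hqcc hqcc' hqcg hqcg' hqccan hqccan' ?_
        intro v
        have h1 := congrFun ((hPhi_eq x hce) ▸ (hPhi_eq x' hce') ▸ hPhieq) v
        simpa using h1
      rw [hxc, hxc', this]
    have hBcard : B.ncard ≤ 2 ^ (n - 1) - 1 := by
      have hBle := Set.ncard_le_ncard_of_injOn (Phi lam p) hmaps hinj (Set.toFinite _)
      have hkcard : (kset lam p).card = (Vv lam p).card - 2 := by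
        unfold kset
        rw [Finset.card_erase_of_mem (Finset.mem_erase.2 ⟨hj0ne, hj0m⟩),
          Finset.card_erase_of_mem (vmax_mem lam p)]
        omega
      have htcard : (Set.univ \ {fun _ => true} :
          Set ({v : ℤ // v ∈ kset lam p} → Bool)).ncard = 2 ^ ((Vv lam p).card - 2) - 1 := by
        rw [Set.ncard_diff_singleton_of_mem (Set.mem_univ _),
          Set.ncard_univ, Nat.card_eq_fintype_card, Fintype.card_fun, Fintype.card_coe,
          Fintype.card_bool, hkcard]
      rw [htcard] at hBle
      have hVle := card_Vv_le lam p
      have hpow : 2 ^ ((Vv lam p).card - 2) ≤ 2 ^ (n - 1) :=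
        Nat.pow_le_pow_right (by norm_num) (by omega)
      omega
    have hsub : S ⊆ A ∪ B := by
      rintro x ⟨q, hxq, hcov⟩
      have hqs := hcov.2.1
      have hctr : Ctr lam p q := ctr_of_ple hp hqs hcov.2.2.1
      by_cases hgap : GapsOK lam p q
      · exact Or.inr ⟨q, hxq, hcov, hgap⟩
      · left
        unfold GapsOK at hgap
        push_neg at hgap
        obtain ⟨v, hv, hvne, hvne2⟩ := hgap
        have hwsp1 := wit_spec hv
        have hvmax : v < vmax lam p := lt_of_le_of_ne (le_vmax hv) hvne
        obtain ⟨hnm, hnlt, hnmin⟩ := nxt_spec hvmax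
        have hwsp2 := wit_spec hnm
        have hEle : |Ediff lam p q v| ≤ nxt lam p v - v := by
          have h1 := hctr (wit lam p v) hwsp1.1 (wit lam p (nxt lam p v)) hwsp2.1
          rw [hwsp2.2, hwsp1.2] at h1
          unfold Ediff
          rwa [abs_of_nonneg (by omega : (0:ℤ) ≤ nxt lam p v - v)] at h1
        have hle2 : |Ediff lam p q v| ≤ nxt lam p v - v - 2 := by
          have hlt := lt_of_le_of_ne hEle hvne2
          have hp1 := DD_sub_even lam q p (wit lam p (nxt lam p v))
          have hp2 := DD_sub_even lam q p (wit lam p v)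
          rw [hwsp2.2] at hp1
          rw [hwsp1.2] at hp2
          unfold Ediff at hlt ⊢
          rcases le_total 0 (DD lam q (wit lam p (nxt lam p v)) - DD lam q (wit lam p v)) with h | h
          · rw [abs_of_nonneg h] at hlt ⊢; omega
          · rw [abs_of_nonpos h] at hlt ⊢; omega
        have hg2 : 2 ≤ nxt lam p v - v := by
          have := abs_nonneg (Ediff lam p q v); omega
        set S0 : ℕ → ℤ := fun k => Sh v (DD lam p k) with hS0def
        have hS00 : S0 0 = 0 := by rw [hS0def]; simp only []; rw [DD_zero]; exact Sh_zero v
        have hstep : ∀ k : Fin n, |S0 (k.1+1) - S0 k.1| ≤ (lam k : ℤ) := by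
          intro k
          refine le_trans (Sh_lip v _ _) ?_
          have := DD_step_le hp k.1 k.isLt
          simpa using this
        have hparS : ∀ k : Fin n, (2:ℤ) ∣ (S0 (k.1+1) - S0 k.1 - lam k) := by
          intro k
          have h1 := Sh_even v (DD lam p (k.1+1))
          have h2 := Sh_even v (DD lam p k.1)
          have h3 := DD_succ lam p k.1 k.isLt
          simp only [Fin.eta] at h3
          simp only [hS0def]
          omega
        set r := pairOf lam S0 with hrdef
        have hrsum := pairOf_sum hstep
        have hDr := DD_pairOf hS00 hstep hparS
        have hppr : ple p r := by
          rw [ple_iff hp hrsum]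
          intro k l hkl hln
          rw [hDr l hln, hDr k (by omega)]
          exact Sh_lip v _ _
        have cross : ∀ a b, a ≤ n → b ≤ n → DD lam p a ≤ v → v < DD lam p b →
            |DD lam q b - DD lam q a| ≤ |S0 b - S0 a| := by
          intro a b han hbn hDa hDb
          have hDbge : nxt lam p v ≤ DD lam p b := hnmin _ (mem_Vv_of_le hbn) hDb
          have t1 : |DD lam q b - DD lam q (wit lam p (nxt lam p v))| ≤ DD lam p b - nxt lam p v := by
            have h1 := hctr (wit lam p (nxt lam p v)) hwsp2.1 b hbn
            rw [hwsp2.2] at h1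
            rwa [abs_of_nonneg (show (0:ℤ) ≤ DD lam p b - nxt lam p v by omega)] at h1
          have t2 : |DD lam q (wit lam p v) - DD lam q a| ≤ v - DD lam p a := by
            have h1 := hctr a han (wit lam p v) hwsp1.1
            rw [hwsp1.2] at h1
            rwa [abs_of_nonneg (show (0:ℤ) ≤ v - DD lam p a by omega)] at h1
          have t3 := hle2
          unfold Ediff at t3
          have tri1 := abs_sub_le (DD lam q b) (DD lam q (wit lam p (nxt lam p v))) (DD lam q a)
          have tri2 := abs_sub_le (DD lam q (wit lam p (nxt lam p v))) (DD lam q (wit lam p v)) (DD lam q a)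
          have hSb : S0 b - S0 a = DD lam p b - DD lam p a - 2 := by
            simp only [hS0def]
            exact Sh_cross hDa hDb
          rw [hSb, abs_of_nonneg (by omega : (0:ℤ) ≤ DD lam p b - DD lam p a - 2)]
          linarith
        have hrq : ple r q := by
          rw [ple_iff hrsum hqs]
          intro k l hkl hln
          rw [hDr l hln, hDr k (by omega)]
          rcases le_or_gt (DD lam p k) v with hk1 | hk1 <;>
            rcases le_or_gt (DD lam p l) v with hl1 | hl1
          · have hSe : S0 l - S0 k = DD lam p l - DD lam p k := by
              simp only [hS0def]; exact Sh_low hl1 hk1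
            rw [hSe]; exact hctr k (by omega) l hln
          · exact cross k l (by omega) hln hk1 hl1
          · rw [abs_sub_comm, abs_sub_comm (S0 l)]
            exact cross l k hln (by omega) hl1 hk1
          · have hSe : S0 l - S0 k = DD lam p l - DD lam p k := by
              simp only [hS0def]; exact Sh_high hl1 hk1
            rw [hSe]; exact hctr k (by omega) l hln
        have hS : S0 (wit lam p (nxt lam p v)) - S0 (wit lam p v) = nxt lam p v - v - 2 := by
          simp only [hS0def]
          rw [hwsp2.2, hwsp1.2]
          exact Sh_cross le_rfl hnlt
        have hnrp : ¬ ple r p := by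
          rw [ple_iff hrsum hp]
          intro hcon
          rcases le_total (wit lam p v) (wit lam p (nxt lam p v)) with hw | hw
          · have h1 := hcon (wit lam p v) (wit lam p (nxt lam p v)) hw hwsp2.1
            rw [hDr _ hwsp2.1, hDr _ hwsp1.1, hwsp1.2, hwsp2.2, hS] at h1
            rw [abs_of_nonneg (show (0:ℤ) ≤ nxt lam p v - v by omega),
              abs_of_nonneg (show (0:ℤ) ≤ nxt lam p v - v - 2 by omega)] at h1
            omega
          · have h1 := hcon (wit lam p (nxt lam p v)) (wit lam p v) hw hwsp1.1
            rw [hDr _ hwsp2.1, hDr _ hwsp1.1, hwsp1.2, hwsp2.2] at h1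
            rw [show v - nxt lam p v = -(nxt lam p v - v) by ring, abs_neg,
              show S0 (wit lam p v) - S0 (wit lam p (nxt lam p v)) =
                -(S0 (wit lam p (nxt lam p v)) - S0 (wit lam p v)) by ring, abs_neg, hS] at h1
            rw [abs_of_nonneg (show (0:ℤ) ≤ nxt lam p v - v by omega),
              abs_of_nonneg (show (0:ℤ) ≤ nxt lam p v - v - 2 by omega)] at h1
            omega
        rcases hcov.2.2.2.2 r hrsum hppr hrq with hrp | hqr
        · exact absurd hrp hnrp
        · have habs : ∀ k, k ≤ n → ∀ l, l ≤ n →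
              |DD lam q l - DD lam q k| = |DD lam r l - DD lam r k| :=
            fun k hk l hl => le_antisymm (ctr_of_ple hrsum hqs hrq k hk l hl)
              (ctr_of_ple hqs hrsum hqr k hk l hl)
          have hsym := sym2_eq_of_DD_abs hqs hrsum habs
          refine ⟨v, Finset.mem_coe.2 (Finset.mem_erase.2 ⟨hvne, hv⟩), ?_⟩
          rw [hxq, hsym]
          rfl
    have hAcard : A.ncard ≤ n := by
      rw [hAdef]
      refine le_trans (Set.ncard_image_le (Set.toFinite _)) ?_
      rw [Set.ncard_coe_finset, Finset.card_erase_of_mem (vmax_mem lam p)]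
      have := card_Vv_le lam p
      omega
    have hAfin : A.Finite := (Set.toFinite _).image _
    have hBfin : B.Finite := Set.Finite.of_finite_image (Set.toFinite _) hinj
    have h1 : S.ncard ≤ (A ∪ B).ncard := Set.ncard_le_ncard hsub (hAfin.union hBfin)
    have h2 := Set.ncard_union_le A B
    have hpow1 : 1 ≤ 2 ^ (n - 1) := Nat.one_le_two_pow
    omega
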